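/- Let X be an n-dimensional real normed space and Y ⊆ X a k-dimensional subspace (1 ≤ k ≤ n−1) with λ(Y,X) > 1. Then the affine dimension of the set of minimal projections P_min(X,Y) is at most k(n−k) − 2. -/

import Mathlib

open Metric Module

noncomputable section

variable {X : Type*} [NormedAddCommGroup X] [NormedSpace ℝ X]

def IsProjOnto (Y : Submodule ℝ X) (P : X →L[ℝ] X) : Prop :=
  (∀ x, P x ∈ Y) ∧ ∀ y ∈ Y, P y = y

def relProjConst (Y : Submodule ℝ X) : ℝ :=
  sInf {c | ∃ P : X →L[ℝ] X, IsProjOnto Y P ∧ ‖P‖ = c}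

def MinProjSet (Y : Submodule ℝ X) : Set (X →L[ℝ] X) :=
  {P | IsProjOnto Y P ∧ ‖P‖ = relProjConst Y}

def adim {M : Type*} [AddCommGroup M] [Module ℝ M] (S : Set M) : ℕ :=
  finrank ℝ (affineSpan ℝ S).direction

lemma bddBelow_projNorms (Y : Submodule ℝ X) :
    BddBelow {c | ∃ P : X →L[ℝ] X, IsProjOnto Y P ∧ ‖P‖ = c} :=
  ⟨0, by rintro c ⟨P, _, rfl⟩; exact norm_nonneg P⟩

lemma relProjConst_le {Y : Submodule ℝ X} {P : X →L[ℝ] X} (hP : IsProjOnto Y P) :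
    relProjConst Y ≤ ‖P‖ :=
  csInf_le (bddBelow_projNorms Y) ⟨P, hP, rfl⟩

lemma exists_projOnto [FiniteDimensional ℝ X] (Y : Submodule ℝ X) :
    ∃ P : X →L[ℝ] X, IsProjOnto Y P := by
  obtain ⟨Z, hZ⟩ := Submodule.exists_isCompl Y
  let pr : X →ₗ[ℝ] X := Y.subtype ∘ₗ Y.linearProjOfIsCompl Z hZ
  refine ⟨LinearMap.toContinuousLinearMap pr, fun x => ?_, fun y hy => ?_⟩
  · show pr x ∈ Y
    exact (Y.linearProjOfIsCompl Z hZ x).2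
  · exact congrArg Subtype.val (Y.linearProjOfIsCompl_apply_left hZ ⟨y, hy⟩)

lemma isClosed_projOnto (Y : Submodule ℝ X) [FiniteDimensional ℝ X] :
    IsClosed {P : X →L[ℝ] X | IsProjOnto Y P} := by
  have h1 : IsClosed {P : X →L[ℝ] X | ∀ x, P x ∈ Y} := by
    have : {P : X →L[ℝ] X | ∀ x, P x ∈ Y} = ⋂ x, {P : X →L[ℝ] X | P x ∈ (Y : Set X)} := by
      ext P; simp [Set.mem_iInter]
    rw [this]
    refine isClosed_iInter fun x => ?_
    exact IsClosed.preimage (ContinuousLinearMap.apply ℝ X x).continuous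
      Y.closed_of_finiteDimensional
  have h2 : IsClosed {P : X →L[ℝ] X | ∀ y ∈ Y, P y = y} := by
    have : {P : X →L[ℝ] X | ∀ y ∈ Y, P y = y} = ⋂ y ∈ Y, {P : X →L[ℝ] X | P y = y} := by
      ext P; simp [Set.mem_iInter]
    rw [this]
    refine isClosed_biInter fun y _ => ?_
    exact isClosed_eq ((ContinuousLinearMap.apply ℝ X y).continuous) continuous_const
  exact h1.inter h2

lemma minProjSet_nonempty [FiniteDimensional ℝ X] (Y : Submodule ℝ X) :
    (MinProjSet Y).Nonempty := by
  obtain ⟨P₀, hP₀⟩ := exists_projOnto Y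
  set C : Set (X →L[ℝ] X) := {P | IsProjOnto Y P} ∩ closedBall 0 ‖P₀‖ with hC
  have hCne : C.Nonempty := ⟨P₀, hP₀, by simp⟩
  have hCcomp : IsCompact C :=
    (isCompact_closedBall _ _).of_isClosed_subset
      ((isClosed_projOnto Y).inter isClosed_closedBall) Set.inter_subset_right
  obtain ⟨P, hPC, hmin⟩ := hCcomp.exists_isMinOn hCne continuous_norm.continuousOn
  refine ⟨P, hPC.1, le_antisymm ?_ (relProjConst_le hPC.1)⟩
  refine le_csInf ⟨‖P₀‖, P₀, hP₀, rfl⟩ ?_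
  rintro c ⟨Q, hQ, rfl⟩
  by_cases hc : ‖Q‖ ≤ ‖P₀‖
  · exact hmin ⟨hQ, by simpa using hc⟩
  · exact le_trans (by simpa using hPC.2) (le_of_not_ge hc)

lemma convex_minProjSet (Y : Submodule ℝ X) : Convex ℝ (MinProjSet Y) := by
  rintro P ⟨hP, hPn⟩ Q ⟨hQ, hQn⟩ a b ha hb hab
  have hproj : IsProjOnto Y (a • P + b • Q) := by
    refine ⟨fun x => ?_, fun y hy => ?_⟩
    · exact Y.add_mem (Y.smul_mem a (hP.1 x)) (Y.smul_mem b (hQ.1 x))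
    · show a • P y + b • Q y = y
      rw [hP.2 y hy, hQ.2 y hy, ← add_smul, hab, one_smul]
  refine ⟨hproj, le_antisymm ?_ (relProjConst_le hproj)⟩
  calc ‖a • P + b • Q‖ ≤ a * ‖P‖ + b * ‖Q‖ := by
        refine (norm_add_le _ _).trans (add_le_add ?_ ?_)
        · exact (norm_smul_le a P).trans (by rw [Real.norm_eq_abs, abs_of_nonneg ha])
        · exact (norm_smul_le b Q).trans (by rw [Real.norm_eq_abs, abs_of_nonneg hb])
      _ = relProjConst Y := by rw [hPn, hQn, ← add_mul, hab, one_mul]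

lemma exists_norm_attained [FiniteDimensional ℝ X] [Nontrivial X] (Q : X →L[ℝ] X) :
    ∃ x : X, ‖x‖ = 1 ∧ ‖Q x‖ = ‖Q‖ := by
  have hsne : (sphere (0 : X) 1).Nonempty := by
    rw [NormedSpace.sphere_nonempty]; norm_num
  obtain ⟨x₀, hx₀s, hmax⟩ := (isCompact_sphere (0 : X) 1).exists_isMaxOn hsne
    ((Q.continuous.norm).continuousOn)
  have hx₀ : ‖x₀‖ = 1 := by simpa using hx₀s
  refine ⟨x₀, hx₀, le_antisymm (by simpa [hx₀] using Q.le_opNorm x₀) ?_⟩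
  refine Q.opNorm_le_bound (norm_nonneg _) fun x => ?_
  rcases eq_or_ne x 0 with rfl | hx
  · simp
  · have hu : (‖x‖⁻¹ • x) ∈ sphere (0 : X) 1 := by
      simp [norm_smul, abs_of_nonneg (inv_nonneg.2 (norm_nonneg x)),
        inv_mul_cancel₀ (norm_ne_zero_iff.2 hx)]
    have := hmax hu
    simp only [Set.mem_setOf_eq, map_smul, norm_smul, Real.norm_eq_abs,
      abs_of_nonneg (inv_nonneg.2 (norm_nonneg x))] at this
    have h2 : ‖Q x‖ = ‖x‖ * (‖x‖⁻¹ * ‖Q x‖) := by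
      rw [← mul_assoc, mul_inv_cancel₀ (norm_ne_zero_iff.2 hx), one_mul]
    rw [h2]
    calc ‖x‖ * (‖x‖⁻¹ * ‖Q x‖) ≤ ‖x‖ * ‖Q x₀‖ :=
          mul_le_mul_of_nonneg_left this (norm_nonneg x)
      _ = ‖Q x₀‖ * ‖x‖ := mul_comm _ _

lemma exists_annihilator [FiniteDimensional ℝ X] {Y : Submodule ℝ X} {x : X} (hx : x ∉ Y) :
    ∃ ζ : X →L[ℝ] ℝ, (∀ y ∈ Y, ζ y = 0) ∧ ζ x = 1 := by
  have hne : Y.mkQ x ≠ 0 := by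
    simpa [Submodule.mkQ_apply, Submodule.Quotient.mk_eq_zero] using hx
  have : ¬ ∀ φ : Module.Dual ℝ (X ⧸ Y), φ (Y.mkQ x) = 0 := by
    rw [Module.forall_dual_apply_eq_zero_iff]; exact hne
  push_neg at this
  obtain ⟨φ, hφ⟩ := this
  set c := (φ (Y.mkQ x))⁻¹ with hc
  let g : X →ₗ[ℝ] ℝ := c • (φ ∘ₗ Y.mkQ)
  have hg : ∀ z, (LinearMap.toContinuousLinearMap g) z = c * φ (Y.mkQ z) := fun z => rfl
  refine ⟨LinearMap.toContinuousLinearMap g, fun y hy => ?_, ?_⟩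
  · rw [hg, Submodule.mkQ_apply, (Submodule.Quotient.mk_eq_zero Y).2 hy, map_zero, mul_zero]
  · rw [hg, hc]
    exact inv_mul_cancel₀ hφ

/-- The space of differences of projections onto `Y`. -/
def projDiffSpace (Y : Submodule ℝ X) : Submodule ℝ (X →L[ℝ] X) where
  carrier := {T | (∀ x, T x ∈ Y) ∧ ∀ y ∈ Y, T y = 0}
  add_mem' := fun ha hb => ⟨fun x => Y.add_mem (ha.1 x) (hb.1 x),
    fun y hy => by simp [ha.2 y hy, hb.2 y hy]⟩
  zero_mem' := ⟨fun x => Y.zero_mem, fun y _ => rfl⟩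
  smul_mem' := fun c T hT => ⟨fun x => Y.smul_mem c (hT.1 x),
    fun y hy => by simp [hT.2 y hy]⟩

lemma finrank_projDiffSpace [FiniteDimensional ℝ X] (Y : Submodule ℝ X) :
    finrank ℝ (projDiffSpace Y) = finrank ℝ Y * (finrank ℝ X - finrank ℝ Y) := by
  have hker : ∀ T : projDiffSpace Y, Y ≤ LinearMap.ker
      (LinearMap.codRestrict Y ((T : X →L[ℝ] X) : X →ₗ[ℝ] X) T.2.1) := by
    intro T y hy
    exact Subtype.ext (T.2.2 y hy)
  let F : projDiffSpace Y →ₗ[ℝ] ((X ⧸ Y) →ₗ[ℝ] Y) :=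
    { toFun := fun T => Y.liftQ _ (hker T)
      map_add' := by
        intro T S
        refine Submodule.linearMap_qext _ (LinearMap.ext fun x => Subtype.ext ?_)
        simp
      map_smul' := by
        intro c T
        refine Submodule.linearMap_qext _ (LinearMap.ext fun x => Subtype.ext ?_)
        simp }
  have hbij : Function.Bijective F := by
    constructor
    · intro T S h
      ext x
      have := congrArg (fun G => ((G (Y.mkQ x) : Y) : X)) h
      simpa [F, Submodule.liftQ_apply] using this
    · intro S
      refine ⟨⟨LinearMap.toContinuousLinearMap (Y.subtype ∘ₗ S ∘ₗ Y.mkQ), ?_, ?_⟩, ?_⟩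
      · intro x
        exact (S (Y.mkQ x)).2
      · intro y hy
        show Y.subtype (S (Y.mkQ y)) = 0
        rw [Submodule.mkQ_apply, (Submodule.Quotient.mk_eq_zero Y).2 hy]
        simp
      · refine Submodule.linearMap_qext _ (LinearMap.ext fun x => Subtype.ext ?_)
        simp [F]
  rw [LinearEquiv.finrank_eq (LinearEquiv.ofBijective F hbij), Module.finrank_linearMap]
  have h := Submodule.finrank_quotient_add_finrank Y
  have h2 : finrank ℝ (X ⧸ Y) = finrank ℝ X - finrank ℝ Y := by omega
  rw [h2, Nat.mul_comm]

lemma exists_pm_smul_mem_of_mem_intrinsicInterior {E : Type*} [NormedAddCommGroup E]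
    [NormedSpace ℝ E] {s : Set E} {P : E} (hP : P ∈ intrinsicInterior ℝ s)
    {v : E} (hv : v ∈ (affineSpan ℝ s).direction) :
    ∃ ε : ℝ, 0 < ε ∧ P + ε • v ∈ s ∧ P - ε • v ∈ s := by
  obtain ⟨q, hq, hqP⟩ := mem_intrinsicInterior.1 hP
  rcases eq_or_ne v 0 with rfl | hv0
  · refine ⟨1, one_pos, ?_, ?_⟩ <;>
      simpa [← hqP] using (interior_subset hq : q ∈ _)
  obtain ⟨ε, hε, hball⟩ := Metric.mem_nhds_iff.1 (mem_interior_iff_mem_nhds.1 hq)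
  have hv0' : 0 < ‖v‖ := norm_pos_iff.2 hv0
  set ε' := ε / (2 * ‖v‖) with hε'
  have hε'pos : 0 < ε' := by positivity
  have key : ∀ c : ℝ, |c| = ε' → P + c • v ∈ s := by
    intro c hc
    have hmem : c • v +ᵥ q.1 ∈ affineSpan ℝ s :=
      AffineSubspace.vadd_mem_of_mem_direction ((affineSpan ℝ s).direction.smul_mem c hv) q.2
    have hdist : dist (⟨c • v +ᵥ q.1, hmem⟩ : affineSpan ℝ s) q < ε := by
      rw [Subtype.dist_eq]
      simp only [vadd_eq_add, dist_add_self_left]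
      rw [norm_smul, Real.norm_eq_abs, hc, hε']
      have heq : ‖v‖ * (ε / (2 * ‖v‖)) = ε / 2 := by field_simp
      linarith [heq]
    have := hball hdist
    simpa [hqP, add_comm] using this
  refine ⟨ε', hε'pos, key ε' (abs_of_pos hε'pos), ?_⟩
  have := key (-ε') (by rw [abs_neg, abs_of_pos hε'pos])
  simpa [sub_eq_add_neg, neg_smul] using this

lemma apply_eq_zero_of_max_on_intrinsicInterior {E : Type*} [NormedAddCommGroup E]
    [NormedSpace ℝ E] (L : E →ₗ[ℝ] ℝ) {s : Set E} {c : ℝ}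
    (hle : ∀ Q ∈ s, L Q ≤ c) {P : E} (hP : P ∈ intrinsicInterior ℝ s) (hPc : L P = c)
    {v : E} (hv : v ∈ (affineSpan ℝ s).direction) : L v = 0 := by
  obtain ⟨ε, hε, h₁, h₂⟩ := exists_pm_smul_mem_of_mem_intrinsicInterior hP hv
  have e1 := hle _ h₁
  have e2 := hle _ h₂
  rw [map_add, map_smul, hPc] at e1
  rw [map_sub, map_smul, hPc] at e2
  have : ε • L v = 0 := le_antisymm (by linarith) (by linarith)
  simpa [smul_eq_mul, hε.ne'] using this

lemma arith_contra {lam α β δ γ A B : ℝ} (hlam : 1 < lam) (hα : 0 < α) (hβ : 0 < β)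
    (hδ : 0 < δ) (hγ : γ < 0) (hαA : α * A = lam) (hγB : γ * B = lam)
    (h1 : |α * (δ * A - β * B)| ≤ δ + β) (h2 : |γ * (δ * A - β * B)| ≤ δ + β) : False := by
  have hlam0 : (0:ℝ) < lam := by linarith
  have hApos : 0 < A := by
    by_contra hcon
    push_neg at hcon
    nlinarith [mul_nonpos_of_nonneg_of_nonpos hα.le hcon]
  have hBneg : B < 0 := by
    by_contra hcon
    push_neg at hcon
    nlinarith [mul_nonpos_of_nonpos_of_nonneg hγ.le hcon]
  have h1' : δ * lam + α * β * (-B) ≤ δ + β := by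
    have := le_of_abs_le h1
    nlinarith [this]
  have e1 : α * β * (-B) < β := by
    nlinarith [mul_pos hδ (sub_pos.2 hlam)]
  have e2 : α * (-B) < 1 := by
    by_contra hcon
    push_neg at hcon
    nlinarith [mul_le_mul_of_nonneg_right hcon hβ.le]
  have e3 : α * lam < -γ := by
    have h4 : α * (-B) * (-γ) < 1 * (-γ) :=
      mul_lt_mul_of_pos_right e2 (by linarith)
    nlinarith [hγB]
  have h2' : (-γ) * δ * A + β * lam ≤ δ + β := by
    have h5 := neg_le_of_abs_le h2
    nlinarith [h5]
  have e4 : (-γ) * δ * A < δ := by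
    nlinarith [mul_pos hβ (sub_pos.2 hlam)]
  have e5 : (-γ) * A < 1 := by
    by_contra hcon
    push_neg at hcon
    nlinarith [mul_le_mul_of_nonneg_right hcon hδ.le]
  have e6 : (-γ) * lam < α := by
    have h6 : (-γ) * A * α < 1 * α := mul_lt_mul_of_pos_right e5 hα
    nlinarith [hαA]
  nlinarith [mul_lt_mul_of_pos_right e3 hlam0, e6, hα, hlam, hlam0]

set_option maxHeartbeats 2000000 in
/-- If `X` is `n`-dimensional, `Y ⊆ X` is `k`-dimensional with `1 ≤ k ≤ n - 1`, and
`λ(Y, X) > 1`, then the affine dimension of the set of minimal projections is at most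
`k(n-k) - 2`. -/
theorem adim_minProjSet_le_of_projConst_gt_one [FiniteDimensional ℝ X] {n k : ℕ}
    (hn : finrank ℝ X = n) (Y : Submodule ℝ X) (hk : finrank ℝ Y = k)
    (hk1 : 1 ≤ k) (hkn : k ≤ n - 1) (hlam : 1 < relProjConst Y) :
    adim (MinProjSet Y) + 2 ≤ k * (n - k) := by
  classical
  set lam := relProjConst Y with hlamdef
  have hlam0 : 0 < lam := lt_trans one_pos hlam
  have hXpos : 0 < finrank ℝ X := by omega
  have hXnt : Nontrivial X := Module.nontrivial_of_finrank_pos hXpos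
  obtain ⟨P, hPint⟩ :=
    Set.Nonempty.intrinsicInterior (convex_minProjSet Y) (minProjSet_nonempty Y)
  have hPmem : P ∈ MinProjSet Y := intrinsicInterior_subset hPint
  obtain ⟨hPproj, hPnorm⟩ := hPmem
  set V := (affineSpan ℝ (MinProjSet Y)).direction with hV
  set W := projDiffSpace Y with hW
  -- the set of norming pairs for `P`
  set Spair : Set (X × (X →L[ℝ] ℝ)) :=
    {p | ‖p.1‖ ≤ 1 ∧ ‖p.2‖ ≤ 1 ∧ p.2 (P p.1) = lam} with hSpair
  -- a base norming pair
  obtain ⟨x₀, hx₀n, hPx₀⟩ := exists_norm_attained P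
  have hPx₀ne : P x₀ ≠ 0 := by
    rw [← norm_pos_iff, hPx₀, hPnorm]; exact hlam0
  obtain ⟨f₀, hf₀n, hf₀v⟩ := exists_dual_vector ℝ (P x₀) (norm_ne_zero_iff.2 hPx₀ne)
  have hp₀ : (x₀, f₀) ∈ Spair := ⟨le_of_eq hx₀n, le_of_eq hf₀n, by
    rw [hf₀v, hPx₀, hPnorm]; rfl⟩
  -- basic facts about norming pairs
  have pair_notY : ∀ p ∈ Spair, p.1 ∉ Y := by
    rintro ⟨x, f⟩ ⟨h1, h2, h3⟩ hxY
    have hfix : P x = x := hPproj.2 x hxY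
    rw [hfix] at h3
    have hb : ‖f x‖ ≤ ‖f‖ * ‖x‖ := f.le_opNorm x
    have : ‖f x‖ ≤ 1 := hb.trans (by nlinarith [norm_nonneg f, norm_nonneg x])
    rw [h3, Real.norm_eq_abs, abs_of_pos hlam0] at this
    linarith
  have pair_unit : ∀ p ∈ Spair, ∃ T ∈ W, p.2 (T p.1) = 1 := by
    intro p hp
    obtain ⟨ζ, hζY, hζx⟩ := exists_annihilator (pair_notY p hp)
    refine ⟨ζ.smulRight (lam⁻¹ • P p.1), ⟨fun x => ?_, fun y hy => ?_⟩, ?_⟩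
    · exact Y.smul_mem _ (Y.smul_mem _ (hPproj.1 p.1))
    · show ζ y • (lam⁻¹ • P p.1) = 0
      rw [hζY y hy, zero_smul]
    · show p.2 (ζ p.1 • (lam⁻¹ • P p.1)) = 1
      rw [hζx, one_smul, map_smul, smul_eq_mul, hp.2.2]
      exact inv_mul_cancel₀ hlam0.ne'
  -- the constraint coming from the intrinsic interior
  have constraint : ∀ p ∈ Spair, ∀ v ∈ V, p.2 (v p.1) = 0 := by
    intro p hp v hv
    have := apply_eq_zero_of_max_on_intrinsicInterior
      (L := ((p.2.comp (ContinuousLinearMap.apply ℝ X p.1)) :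
        (X →L[ℝ] X) →ₗ[ℝ] ℝ)) (s := MinProjSet Y) (c := lam) ?_ hPint ?_ hv
    · simpa using this
    · rintro Q ⟨hQproj, hQnorm⟩
      show p.2 (Q p.1) ≤ lam
      have hb : ‖p.2 (Q p.1)‖ ≤ ‖p.2‖ * (‖Q‖ * ‖p.1‖) :=
        (p.2.le_opNorm _).trans (by
          exact mul_le_mul_of_nonneg_left (Q.le_opNorm _) (norm_nonneg _))
      have hb2 : ‖p.2 (Q p.1)‖ ≤ lam := by
        rw [hQnorm, ← hlamdef] at hb
        have hbound : ‖p.2‖ * (lam * ‖p.1‖) ≤ 1 * (lam * 1) :=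
          mul_le_mul hp.2.1 (mul_le_mul_of_nonneg_left hp.1 hlam0.le)
            (by positivity) zero_le_one
        linarith
      calc p.2 (Q p.1) ≤ ‖p.2 (Q p.1)‖ := le_abs_self _
        _ ≤ lam := hb2
    · show p.2 (P p.1) = lam
      exact hp.2.2
  -- a direction strictly decreasing on all norming pairs contradicts minimality
  have pair_bound : ∀ (x : X) (f : X →L[ℝ] ℝ), ‖x‖ ≤ 1 → ‖f‖ ≤ 1 → f (P x) ≤ lam := by
    intro x f hx hf
    have h1 : ‖f (P x)‖ ≤ ‖f‖ * (‖P‖ * ‖x‖) :=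
      (f.le_opNorm _).trans (mul_le_mul_of_nonneg_left (P.le_opNorm _) (norm_nonneg _))
    rw [hPnorm, ← hlamdef] at h1
    have hbound : ‖f‖ * (lam * ‖x‖) ≤ 1 * (lam * 1) :=
      mul_le_mul hf (mul_le_mul_of_nonneg_left hx hlam0.le) (by positivity) zero_le_one
    calc f (P x) ≤ ‖f (P x)‖ := le_abs_self _
      _ ≤ lam := by linarith
  have no_descent : ∀ T ∈ W, (∀ p ∈ Spair, p.2 (T p.1) < 0) → False := by
    intro T hTW hneg
    have hseq : ∀ m : ℕ, ∃ z : X × (X →L[ℝ] ℝ), ‖z.1‖ = 1 ∧ ‖z.2‖ = 1 ∧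
        z.2 ((P + (1 / (m + 1) : ℝ) • T) z.1) = ‖(P + (1 / (m + 1) : ℝ) • T) z.1‖ ∧
        lam ≤ ‖(P + (1 / (m + 1) : ℝ) • T) z.1‖ := by
      intro m
      set Q := P + (1 / (m + 1) : ℝ) • T with hQ
      have hQproj : IsProjOnto Y Q := by
        constructor
        · intro x
          exact Y.add_mem (hPproj.1 x) (Y.smul_mem _ (hTW.1 x))
        · intro y hy
          show P y + (1 / (m + 1) : ℝ) • T y = y
          rw [hPproj.2 y hy, hTW.2 y hy, smul_zero, add_zero]
      obtain ⟨x, hx1, hxQ⟩ := exists_norm_attained Q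
      have hQlam : lam ≤ ‖Q x‖ := by rw [hxQ]; exact relProjConst_le hQproj
      have hQxne : Q x ≠ 0 := by rw [← norm_pos_iff]; linarith
      obtain ⟨f, hf1, hfv⟩ := exists_dual_vector ℝ (Q x) (norm_ne_zero_iff.2 hQxne)
      exact ⟨(x, f), hx1, hf1, by rw [hfv]; rfl, hQlam⟩
    choose z hz1 hz2 hz3 hz4 using hseq
    set K := closedBall (0 : X) 1 ×ˢ closedBall (0 : X →L[ℝ] ℝ) 1 with hK
    have hKcomp : IsCompact K := (isCompact_closedBall _ _).prod (isCompact_closedBall _ _)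
    have hzK : ∀ m : ℕ, z m ∈ K := fun m => ⟨by simp [mem_closedBall_zero_iff, hz1 m],
      by simp [mem_closedBall_zero_iff, hz2 m]⟩
    obtain ⟨zb, hzbK, φ, hφ, htend⟩ := hKcomp.tendsto_subseq hzK
    have hAcont : Continuous fun w : X × (X →L[ℝ] ℝ) => w.2 (P w.1) :=
      isBoundedBilinearMap_apply.continuous.comp
        (continuous_snd.prodMk (P.continuous.comp continuous_fst))
    have hBcont : Continuous fun w : X × (X →L[ℝ] ℝ) => w.2 (T w.1) :=
      isBoundedBilinearMap_apply.continuous.comp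
        (continuous_snd.prodMk (T.continuous.comp continuous_fst))
    have hPx : ∀ m : ℕ, (z m).2 (P (z m).1) ≤ lam := fun m =>
      pair_bound _ _ (le_of_eq (hz1 m)) (le_of_eq (hz2 m))
    have heval : ∀ m : ℕ, (z m).2 (P (z m).1) + (1 / (m + 1) : ℝ) * (z m).2 (T (z m).1)
        = ‖(P + (1 / (m + 1) : ℝ) • T) (z m).1‖ := by
      intro m
      rw [← hz3 m]
      simp [ContinuousLinearMap.add_apply, ContinuousLinearMap.smul_apply, map_add, map_smul,
        smul_eq_mul]
    have hBpos : ∀ m : ℕ, 0 ≤ (z m).2 (T (z m).1) := by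
      intro m
      have h := heval m
      have h4 := hz4 m
      have hc : (0:ℝ) < 1 / (m + 1 : ℝ) := by positivity
      by_contra hB
      push_neg at hB
      nlinarith [mul_pos hc (neg_pos.2 hB), hPx m]
    have hTb : ∀ m : ℕ, |(z m).2 (T (z m).1)| ≤ ‖T‖ := by
      intro m
      have h1 : ‖(z m).2 (T (z m).1)‖ ≤ ‖(z m).2‖ * (‖T‖ * ‖(z m).1‖) :=
        ((z m).2.le_opNorm _).trans (mul_le_mul_of_nonneg_left (T.le_opNorm _) (norm_nonneg _))
      rw [hz1 m, hz2 m, one_mul, mul_one] at h1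
      exact h1
    have hAlow : ∀ m : ℕ, lam - (1 / (m + 1) : ℝ) * ‖T‖ ≤ (z m).2 (P (z m).1) := by
      intro m
      have h := heval m
      have h4 := hz4 m
      have hc : (0:ℝ) < 1 / (m + 1 : ℝ) := by positivity
      have h5 : (1 / (m + 1) : ℝ) * (z m).2 (T (z m).1) ≤ (1 / (m + 1) : ℝ) * ‖T‖ :=
        mul_le_mul_of_nonneg_left (le_of_abs_le (hTb m)) hc.le
      linarith
    have htendA : Filter.Tendsto (fun m => (z (φ m)).2 (P (z (φ m)).1)) Filter.atTop
        (nhds (zb.2 (P zb.1))) := (hAcont.tendsto zb).comp htend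
    have htendB : Filter.Tendsto (fun m => (z (φ m)).2 (T (z (φ m)).1)) Filter.atTop
        (nhds (zb.2 (T zb.1))) := (hBcont.tendsto zb).comp htend
    have htendc : Filter.Tendsto (fun m => lam - (1 / (φ m + 1) : ℝ) * ‖T‖) Filter.atTop
        (nhds lam) := by
      have h0 : Filter.Tendsto (fun m : ℕ => (1 / (m + 1) : ℝ)) Filter.atTop (nhds 0) :=
        tendsto_one_div_add_atTop_nhds_zero_nat
      have h1 := (h0.comp hφ.tendsto_atTop).mul_const ‖T‖
      have h2 := Filter.Tendsto.const_sub lam h1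
      simpa using h2
    have hzb2 : zb.2 (P zb.1) = lam := by
      refine le_antisymm
        (pair_bound _ _ (mem_closedBall_zero_iff.1 hzbK.1) (mem_closedBall_zero_iff.1 hzbK.2)) ?_
      exact le_of_tendsto_of_tendsto' htendc htendA fun m => hAlow (φ m)
    have hzbS : zb ∈ Spair := ⟨mem_closedBall_zero_iff.1 hzbK.1,
      mem_closedBall_zero_iff.1 hzbK.2, hzb2⟩
    have hBzb : 0 ≤ zb.2 (T zb.1) := ge_of_tendsto' htendB fun m => hBpos (φ m)
    exact absurd (hneg zb hzbS) (not_lt.2 hBzb)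
  -- decomposition in the proportional case
  have hf₀Px₀ : f₀ (P x₀) = lam := hp₀.2.2
  have hPx₀Y : P x₀ ∈ Y := hPproj.1 x₀
  have decomp : ∀ p ∈ Spair, ∀ s : ℝ, s ≠ 0 →
      (∀ T ∈ W, p.2 (T p.1) = s * f₀ (T x₀)) →
      ∃ β α : ℝ, β ≠ 0 ∧ α * β = s ∧ (∀ y ∈ Y, p.2 y = α * f₀ y) ∧
        p.1 - β • x₀ ∈ Y := by
    intro p hp s hs0 hs
    obtain ⟨ζ, hζY, hζx₀⟩ := exists_annihilator (pair_notY (x₀, f₀) hp₀)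
    set β := ζ p.1 with hβdef
    have hrel : ∀ y ∈ Y, β * p.2 y = s * f₀ y := by
      intro y hy
      have hTW : ζ.smulRight y ∈ W := ⟨fun x => Y.smul_mem _ hy, fun y' hy' => by
        show ζ y' • y = 0
        rw [hζY y' hy', zero_smul]⟩
      have h := hs _ hTW
      simp only [ContinuousLinearMap.smulRight_apply, map_smul, smul_eq_mul] at h
      rw [hζx₀] at h
      rw [← hβdef] at h
      linarith [h]
    have hβ0 : β ≠ 0 := by
      intro h0
      have h := hrel (P x₀) hPx₀Y
      rw [h0, zero_mul, hf₀Px₀] at h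
      rcases mul_eq_zero.1 h.symm with h' | h'
      · exact hs0 h'
      · exact hlam0.ne' h'
    set α := s / β with hαdef
    have hαβ : α * β = s := div_mul_cancel₀ s hβ0
    have hα0 : α ≠ 0 := fun h => hs0 (by rw [← hαβ, h, zero_mul])
    have hfy : ∀ y ∈ Y, p.2 y = α * f₀ y := by
      intro y hy
      have h := hrel y hy
      rw [hαdef]
      field_simp
      linarith [h]
    refine ⟨β, α, hβ0, hαβ, hfy, ?_⟩
    by_contra hmem
    obtain ⟨ζ', hζ'Y, hζ'v⟩ := exists_annihilator hmem
    have hclaim : ζ' p.1 = β * ζ' x₀ := by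
      have hTW : ζ'.smulRight (P x₀) ∈ W := ⟨fun x => Y.smul_mem _ hPx₀Y, fun y' hy' => by
        show ζ' y' • P x₀ = 0
        rw [hζ'Y y' hy', zero_smul]⟩
      have h := hs _ hTW
      simp only [ContinuousLinearMap.smulRight_apply, map_smul, smul_eq_mul] at h
      rw [hfy (P x₀) hPx₀Y, hf₀Px₀] at h
      -- h : ζ' p.1 * (α * lam) = s * (ζ' x₀ * lam)
      have h2 : ζ' p.1 * α = s * ζ' x₀ :=
        mul_right_cancel₀ hlam0.ne' (by linear_combination h)
      rw [← hαβ] at h2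
      have h3 : α * ζ' p.1 = α * (β * ζ' x₀) := by linear_combination h2
      exact mul_left_cancel₀ hα0 h3
    have : ζ' (p.1 - β • x₀) = 0 := by
      rw [map_sub, map_smul, smul_eq_mul, hclaim]
      ring
    rw [hζ'v] at this
    exact one_ne_zero this
  -- sign-normalized decomposition
  have decomp' : ∀ p ∈ Spair, ∀ s : ℝ, s ≠ 0 →
      (∀ T ∈ W, p.2 (T p.1) = s * f₀ (T x₀)) →
      ∃ q ∈ Spair, ∃ β α : ℝ, 0 < β ∧ α * β = s ∧ (∀ y ∈ Y, q.2 y = α * f₀ y) ∧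
        q.1 - β • x₀ ∈ Y := by
    intro p hp s hs0 hs
    obtain ⟨β, α, hβ0, hαβ, hfy, hmem⟩ := decomp p hp s hs0 hs
    rcases hβ0.lt_or_gt with hβneg | hβpos
    · refine ⟨(-p.1, -p.2), ⟨by simpa using hp.1, by simpa using hp.2.1, ?_⟩,
        -β, -α, by linarith, by rw [neg_mul_neg]; exact hαβ, fun y hy => ?_, ?_⟩
      · show (-p.2) (P (-p.1)) = lam
        simp only [map_neg, ContinuousLinearMap.neg_apply, neg_neg]
        exact hp.2.2
      · show (-p.2) y = -α * f₀ y
        simp only [ContinuousLinearMap.neg_apply]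
        rw [hfy y hy]; ring
      · show -p.1 - (-β) • x₀ ∈ Y
        have : -p.1 - (-β) • x₀ = -(p.1 - β • x₀) := by module
        rw [this]
        exact Y.neg_mem hmem
    · exact ⟨p, hp, β, α, hβpos, hαβ, hfy, hmem⟩
  by_cases hprop : ∀ p ∈ Spair, ∃ s : ℝ, ∀ T ∈ W, p.2 (T p.1) = s * f₀ (T x₀)
  · -- proportional case: impossible
    exfalso
    -- every proportionality constant is nonzero
    have hsne : ∀ p ∈ Spair, ∀ s : ℝ, (∀ T ∈ W, p.2 (T p.1) = s * f₀ (T x₀)) → s ≠ 0 := by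
      intro p hp s hs hs0
      obtain ⟨T, hT, hT1⟩ := pair_unit p hp
      rw [hs T hT, hs0, zero_mul] at hT1
      exact one_ne_zero hT1.symm
    obtain ⟨T', hT'W, hT'1⟩ := pair_unit (x₀, f₀) hp₀
    by_cases hmix : (∃ p ∈ Spair, ∃ s : ℝ, 0 < s ∧ ∀ T ∈ W, p.2 (T p.1) = s * f₀ (T x₀)) ∧
        (∃ p ∈ Spair, ∃ s : ℝ, s < 0 ∧ ∀ T ∈ W, p.2 (T p.1) = s * f₀ (T x₀))
    · -- mixed signs: elementary contradiction with `lam > 1`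
      obtain ⟨⟨p₁, hp₁S, s₁, hs₁pos, hs₁⟩, ⟨p₂, hp₂S, s₂, hs₂neg, hs₂⟩⟩ := hmix
      obtain ⟨q₁, hq₁S, β, α, hβ, hαβ, hq₁f, hq₁mem⟩ :=
        decomp' p₁ hp₁S s₁ (ne_of_gt hs₁pos) hs₁
      obtain ⟨q₂, hq₂S, δ, γ, hδ, hγδ, hq₂f, hq₂mem⟩ :=
        decomp' p₂ hp₂S s₂ (ne_of_lt hs₂neg) hs₂
      have hα : 0 < α := by
        by_contra hcon
        push_neg at hcon
        nlinarith [mul_nonpos_of_nonpos_of_nonneg hcon hβ.le]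
      have hγ : γ < 0 := by
        by_contra hcon
        push_neg at hcon
        nlinarith [mul_nonneg hcon hδ.le]
      set x := q₁.1 with hxdef
      set f := q₁.2 with hfdef
      set u := q₂.1 with hudef
      set g := q₂.2 with hgdef
      set w := δ • x - β • u with hw
      have hwY : w ∈ Y := by
        have heq : w = δ • (x - β • x₀) - β • (u - δ • x₀) := by
          rw [hw]; module
        rw [heq]
        exact Y.sub_mem (Y.smul_mem _ hq₁mem) (Y.smul_mem _ hq₂mem)
      set A := f₀ (P x) with hA
      set B := f₀ (P u) with hB
      have hαA : α * A = lam := by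
        rw [hA, ← hq₁f (P x) (hPproj.1 x)]
        exact hq₁S.2.2
      have hγB : γ * B = lam := by
        rw [hB, ← hq₂f (P u) (hPproj.1 u)]
        exact hq₂S.2.2
      have hPw : P w = w := hPproj.2 w hwY
      have hf₀w : f₀ w = δ * A - β * B := by
        conv_lhs => rw [← hPw, hw]
        rw [map_sub, map_smul, map_smul, map_sub, map_smul, map_smul]
        simp [hA, hB, smul_eq_mul]
      have hfw : f w = α * (δ * A - β * B) := by rw [hq₁f w hwY, hf₀w]
      have hgw : g w = γ * (δ * A - β * B) := by rw [hq₂f w hwY, hf₀w]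
      have hnw : ‖w‖ ≤ δ + β := by
        calc ‖w‖ ≤ ‖δ • x‖ + ‖β • u‖ := norm_sub_le _ _
          _ = |δ| * ‖x‖ + |β| * ‖u‖ := by
              rw [norm_smul, norm_smul, Real.norm_eq_abs, Real.norm_eq_abs]
          _ ≤ δ * 1 + β * 1 := by
              rw [abs_of_pos hδ, abs_of_pos hβ]
              exact add_le_add (mul_le_mul_of_nonneg_left hq₁S.1 hδ.le)
                (mul_le_mul_of_nonneg_left hq₂S.1 hβ.le)
          _ = δ + β := by ring
      have hfwb : |f w| ≤ δ + β := by
        have h1 : ‖f w‖ ≤ ‖f‖ * ‖w‖ := f.le_opNorm w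
        have h2 : ‖f‖ * ‖w‖ ≤ 1 * (δ + β) :=
          mul_le_mul hq₁S.2.1 hnw (norm_nonneg w) zero_le_one
        rw [Real.norm_eq_abs] at h1
        linarith
      have hgwb : |g w| ≤ δ + β := by
        have h1 : ‖g w‖ ≤ ‖g‖ * ‖w‖ := g.le_opNorm w
        have h2 : ‖g‖ * ‖w‖ ≤ 1 * (δ + β) :=
          mul_le_mul hq₂S.2.1 hnw (norm_nonneg w) zero_le_one
        rw [Real.norm_eq_abs] at h1
        linarith
      refine arith_contra hlam hα hβ hδ hγ hαA hγB ?_ ?_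
      · rw [← hfw]; exact hfwb
      · rw [← hgw]; exact hgwb
    · -- all signs equal: contradicts minimality via `no_descent`
      rw [not_and_or] at hmix
      rcases hmix with hno | hno
      · refine no_descent T' hT'W fun p hp => ?_
        obtain ⟨s, hs⟩ := hprop p hp
        have hs0 : s ≠ 0 := hsne p hp s hs
        have hsneg : s < 0 := by
          rcases hs0.lt_or_gt with h | h
          · exact h
          · exact absurd ⟨p, hp, s, h, hs⟩ hno
        rw [hs T' hT'W, hT'1, mul_one]
        exact hsneg
      · refine no_descent (-T') (W.neg_mem hT'W) fun p hp => ?_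
        obtain ⟨s, hs⟩ := hprop p hp
        have hs0 : s ≠ 0 := hsne p hp s hs
        have hspos : 0 < s := by
          rcases hs0.lt_or_gt with h | h
          · exact absurd ⟨p, hp, s, h, hs⟩ hno
          · exact h
        have hval : f₀ ((-T') x₀) = -1 := by
          rw [ContinuousLinearMap.neg_apply, map_neg, hT'1]
        rw [hs (-T') (W.neg_mem hT'W), hval]
        nlinarith
  · -- non-proportional case: two independent constraints
    push_neg at hprop
    obtain ⟨p₁, hp₁S, hp₁⟩ := hprop
    obtain ⟨T₀, hT₀W, hT₀1⟩ := pair_unit (x₀, f₀) hp₀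
    set c := p₁.2 (T₀ p₁.1) with hcdef
    obtain ⟨T₁, hT₁W, hT₁ne⟩ := hp₁ c
    set T₂ := T₁ - f₀ (T₁ x₀) • T₀ with hT₂def
    have hT₂W : T₂ ∈ W := W.sub_mem hT₁W (W.smul_mem _ hT₀W)
    have hT₂0 : f₀ (T₂ x₀) = 0 := by
      rw [hT₂def]
      simp only [ContinuousLinearMap.sub_apply, ContinuousLinearMap.smul_apply, map_sub,
        map_smul, smul_eq_mul, hT₀1]
      ring
    set e := p₁.2 (T₂ p₁.1) with hedef
    have he0 : e ≠ 0 := by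
      rw [hedef, hT₂def]
      simp only [ContinuousLinearMap.sub_apply, ContinuousLinearMap.smul_apply, map_sub,
        map_smul, smul_eq_mul]
      intro hcon
      apply hT₁ne
      linarith [hcon]
    -- the two constraint functionals on W
    set L₀ : (X →L[ℝ] X) →ₗ[ℝ] ℝ :=
      ((f₀.comp (ContinuousLinearMap.apply ℝ X x₀)) : (X →L[ℝ] X) →L[ℝ] ℝ).toLinearMap
      with hL₀def
    set L₁ : (X →L[ℝ] X) →ₗ[ℝ] ℝ :=
      ((p₁.2.comp (ContinuousLinearMap.apply ℝ X p₁.1)) : (X →L[ℝ] X) →L[ℝ] ℝ).toLinearMap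
      with hL₁def
    have hL₀app : ∀ T : X →L[ℝ] X, L₀ T = f₀ (T x₀) := fun T => rfl
    have hL₁app : ∀ T : X →L[ℝ] X, L₁ T = p₁.2 (T p₁.1) := fun T => rfl
    set Φ : W →ₗ[ℝ] ℝ × ℝ :=
      LinearMap.prod (L₀.comp W.subtype) (L₁.comp W.subtype) with hΦdef
    have hΦapp : ∀ T : W, Φ T = (f₀ ((T : X →L[ℝ] X) x₀), p₁.2 ((T : X →L[ℝ] X) p₁.1)) :=
      fun T => rfl
    have hsurj : Function.Surjective Φ := by
      rintro ⟨a, b⟩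
      refine ⟨a • ⟨T₀, hT₀W⟩ + ((b - a * c) / e) • ⟨T₂, hT₂W⟩, ?_⟩
      have h1 : Φ (a • ⟨T₀, hT₀W⟩ + ((b - a * c) / e) • ⟨T₂, hT₂W⟩)
          = a • Φ ⟨T₀, hT₀W⟩ + ((b - a * c) / e) • Φ ⟨T₂, hT₂W⟩ := by
        rw [map_add, map_smul, map_smul]
      rw [h1, hΦapp, hΦapp]
      simp only [hT₀1, hT₂0, ← hcdef, ← hedef, Prod.smul_mk, smul_eq_mul, Prod.mk_add_mk]
      refine Prod.ext ?_ ?_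
      · show a * 1 + (b - a * c) / e * 0 = a
        ring
      · show a * c + (b - a * c) / e * e = b
        field_simp
        ring
    have hrange : finrank ℝ (LinearMap.range Φ) = 2 := by
      rw [LinearMap.range_eq_top.2 hsurj, finrank_top]
      simp [Module.finrank_prod]
    have hrn := LinearMap.finrank_range_add_finrank_ker Φ
    rw [hrange] at hrn
    have hWrank : finrank ℝ W = k * (n - k) := by
      rw [hW, finrank_projDiffSpace, hk, hn]
    -- V is contained in W
    have hVW : V ≤ W := by
      rw [hV, direction_affineSpan]
      rw [vectorSpan_def]
      refine Submodule.span_le.2 ?_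
      rintro v ⟨P₁, hP₁, P₂, hP₂, rfl⟩
      refine ⟨fun x => ?_, fun y hy => ?_⟩
      · show P₁ x - P₂ x ∈ Y
        exact Y.sub_mem (hP₁.1.1 x) (hP₂.1.1 x)
      · show P₁ y - P₂ y = 0
        rw [hP₁.1.2 y hy, hP₂.1.2 y hy, sub_self]
    -- V maps into the kernel of Φ
    have hVker : V ≤ (LinearMap.ker Φ).map W.subtype := by
      intro v hv
      refine Submodule.mem_map.2 ⟨⟨v, hVW hv⟩, ?_, rfl⟩
      have hzero : Φ ⟨v, hVW hv⟩ = (0, 0) := by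
        rw [hΦapp]
        exact Prod.ext (constraint (x₀, f₀) hp₀ v hv) (constraint p₁ hp₁S v hv)
      exact LinearMap.mem_ker.2 (by rw [hzero]; rfl)
    have hfin : finrank ℝ ((LinearMap.ker Φ).map W.subtype) = finrank ℝ (LinearMap.ker Φ) :=
      Submodule.finrank_map_subtype_eq W (LinearMap.ker Φ)
    have hle : finrank ℝ V ≤ finrank ℝ (LinearMap.ker Φ) := by
      rw [← hfin]
      exact Submodule.finrank_mono hVker
    show finrank ℝ V + 2 ≤ k * (n - k)
    omega
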